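/- Let I be the d×d identity matrix and a_1, ..., a_N ∈ ℝ^d with ‖a_i‖_2 ≤ 1 for all i. Let V_t = I + ∑_{s≤t} a_s a_s^⊤. Then ∑_{t=1}^N min{1, ‖a_t‖²_{V_{t-1}^{-1}}} ≤ 2d log(1 + N/d). -/

import Mathlib

open Matrix

lemma outer_psd (d : ℕ) (u : Fin d → ℝ) : (vecMulVec u u).PosSemidef := by
  rw [vecMulVec_eq (Fin 1)]
  have := posSemidef_self_mul_conjTranspose (replicateCol (Fin 1) u)
  convert this using 1
  ext i j; simp [replicateRow, mul_apply]

lemma det_add_outer (d : ℕ) (M : Matrix (Fin d) (Fin d) ℝ) (u : Fin d → ℝ) (hM : M.PosDef) :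
    (M + vecMulVec u u).det = M.det * (1 + u ⬝ᵥ M⁻¹ *ᵥ u) := by
  have hdet : IsUnit M.det := isUnit_iff_ne_zero.2 (ne_of_gt hM.det_pos)
  have h1 : M + vecMulVec u u = M * (1 + M⁻¹ * vecMulVec u u) := by
    rw [mul_add, mul_one, ← mul_assoc, Matrix.mul_nonsing_inv _ hdet, one_mul]
  rw [h1, det_mul, vecMulVec_eq (Fin 1), ← Matrix.mul_assoc, ← replicateCol_mulVec,
    det_one_add_replicateCol_mul_replicateRow]

lemma trace_eq_sum_eig (d : ℕ) (A : Matrix (Fin d) (Fin d) ℝ) (hA : A.IsHermitian) :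
    A.trace = ∑ i, hA.eigenvalues i := by
  conv_lhs => rw [hA.spectral_theorem, Unitary.conjStarAlgAut_apply]
  rw [Matrix.trace_mul_cycle,
    show (star (hA.eigenvectorUnitary : Matrix (Fin d) (Fin d) ℝ)) *
        (hA.eigenvectorUnitary : Matrix (Fin d) (Fin d) ℝ) = 1 from Unitary.coe_star_mul_self _]
  simp [Matrix.trace_diagonal]

lemma min_le_two_log (x : ℝ) (hx : 0 ≤ x) : min 1 x ≤ 2 * Real.log (1 + x) := by
  rcases le_total 1 x with h | h
  · rw [min_eq_left h]
    have h2 : Real.log 2 ≤ Real.log (1 + x) := by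
      apply Real.log_le_log (by norm_num); linarith
    nlinarith [Real.log_two_gt_d9]
  · rw [min_eq_right (by linarith)]
    have key : Real.exp (x / 2) ≤ 1 + x := by
      have h2 : (1 - x/2) * Real.exp (x/2) ≤ 1 := by
        have := Real.add_one_le_exp (-(x/2))
        have hp : Real.exp (-(x/2)) * Real.exp (x/2) = 1 := by
          rw [← Real.exp_add]; simp
        nlinarith [Real.exp_pos (x/2)]
      nlinarith [Real.exp_pos (x/2)]
    have := Real.log_le_log (Real.exp_pos (x/2)) key
    rw [Real.log_exp] at this
    linarith

theorem elliptical_potential_lemma (d N : ℕ) (hd : 0 < d)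
    (a : ℕ → Fin d → ℝ)
    (hnorm : ∀ t, ∑ j, (a t j) ^ 2 ≤ 1)
    (V : ℕ → Matrix (Fin d) (Fin d) ℝ)
    (hV : ∀ t, V t = 1 + ∑ s ∈ Finset.range t, vecMulVec (a s) (a s)) :
    ∑ t ∈ Finset.range N,
        min 1 (a t ⬝ᵥ ((V t)⁻¹).mulVec (a t)) ≤
      2 * d * Real.log (1 + N / d) := by
  have hd' : (0:ℝ) < d := by exact_mod_cast hd
  have hPD : ∀ t, (V t).PosDef := by
    intro t; rw [hV t]
    exact Matrix.PosDef.add_posSemidef Matrix.PosDef.one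
      (Finset.sum_induction _ _ (fun _ _ => Matrix.PosSemidef.add) Matrix.PosSemidef.zero
        (fun s _ => outer_psd d (a s)))
  set w : ℕ → ℝ := fun t => a t ⬝ᵥ (V t)⁻¹ *ᵥ a t with hwdef
  have hw0 : ∀ t, 0 ≤ w t := fun t => by
    simpa using ((hPD t).inv).posSemidef.dotProduct_mulVec_nonneg (a t)
  have hdet_step : ∀ t, (V (t+1)).det = (V t).det * (1 + w t) := by
    intro t
    have hVs : V (t+1) = V t + vecMulVec (a t) (a t) := by
      rw [hV (t+1), hV t, Finset.sum_range_succ, ← add_assoc]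
    rw [hVs, det_add_outer d (V t) (a t) (hPD t)]
  have hdet : ∀ t, (V t).det = ∏ s ∈ Finset.range t, (1 + w s) := by
    intro t; induction t with
    | zero => simp [hV 0]
    | succ n ih => rw [Finset.prod_range_succ, hdet_step n, ih]
  -- spectral bound on log det
  have hH := (hPD N).isHermitian
  have hev : ∀ i, 0 < hH.eigenvalues i := (hPD N).eigenvalues_pos
  have hdetprod : (V N).det = ∏ i, hH.eigenvalues i := by
    simpa using hH.det_eq_prod_eigenvalues
  have htr : (V N).trace = ∑ i, hH.eigenvalues i := trace_eq_sum_eig d (V N) hH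
  have htrbound : (V N).trace ≤ d + N := by
    rw [hV N, Matrix.trace_add, Matrix.trace_one, Matrix.trace_sum]
    have : ∑ s ∈ Finset.range N, (vecMulVec (a s) (a s)).trace ≤ ∑ s ∈ Finset.range N, 1 := by
      apply Finset.sum_le_sum
      intro s _
      have : (vecMulVec (a s) (a s)).trace = ∑ j, (a s j) ^ 2 := by
        simp [Matrix.trace, Matrix.diag, vecMulVec_apply, sq]
      rw [this]; exact hnorm s
    simp only [Finset.sum_const, Finset.card_range, nsmul_eq_mul, mul_one] at this
    simp only [Fintype.card_fin]
    linarith [this]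
  set c : ℝ := 1 + N / d with hcdef
  have hc : 0 < c := by positivity
  have hdc : (d:ℝ) * c = d + N := by rw [hcdef]; field_simp
  have hlogdet : Real.log ((V N).det) ≤ d * Real.log c := by
    have hlp : Real.log ((V N).det) = ∑ i, Real.log (hH.eigenvalues i) := by
      rw [hdetprod, Real.log_prod]
      intro i _; exact ne_of_gt (hev i)
    have hlogi : ∀ i, Real.log (hH.eigenvalues i) ≤ hH.eigenvalues i / c - 1 + Real.log c := by
      intro i
      have h1 := Real.log_le_sub_one_of_pos (div_pos (hev i) hc)
      rw [Real.log_div (ne_of_gt (hev i)) (ne_of_gt hc)] at h1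
      linarith
    have hsum : ∑ i, Real.log (hH.eigenvalues i)
        ≤ ∑ i, (hH.eigenvalues i / c - 1 + Real.log c) :=
      Finset.sum_le_sum fun i _ => hlogi i
    have hs2 : ∑ i, (hH.eigenvalues i / c - 1 + Real.log c)
        = (V N).trace / c - d + d * Real.log c := by
      rw [htr]
      simp only [Finset.sum_add_distrib, Finset.sum_sub_distrib, Finset.sum_div,
        Finset.sum_const, Finset.card_univ, Fintype.card_fin, nsmul_eq_mul, mul_one]
    have h3 : (V N).trace / c ≤ d := by
      rw [div_le_iff₀ hc]
      calc (V N).trace ≤ (d:ℝ) + N := htrbound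
        _ = d * c := hdc.symm
    rw [hlp]
    calc ∑ i, Real.log (hH.eigenvalues i)
        ≤ (V N).trace / c - d + d * Real.log c := by rw [← hs2]; exact hsum
      _ ≤ d * Real.log c := by linarith
  calc ∑ t ∈ Finset.range N, min 1 (w t)
      ≤ ∑ t ∈ Finset.range N, 2 * Real.log (1 + w t) :=
        Finset.sum_le_sum fun t _ => min_le_two_log _ (hw0 t)
    _ = 2 * Real.log ((V N).det) := by
        rw [hdet N, Real.log_prod (fun s _ => by have := hw0 s; intro h; linarith),
          Finset.mul_sum]
    _ ≤ 2 * (d * Real.log c) := by linarith [hlogdet]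
    _ = 2 * d * Real.log (1 + N / d) := by rw [hcdef]; ring
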